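/- Vanishing of the extra variational terms for strong solutions: let ρ, v, E be C² fields on a neighborhood of x ∈ ℝ² with ρ > 0, derived fields p, T, H, τ as for the compressible Navier–Stokes equations with constant μ and κ, and suppose both v(x) = 0 and the Navier–Stokes equations hold pointwise at x, i.e. ∇·(F^c − F^v)(x) = 0. Then ρ(∇·v) = 0 at x and ρH(∇·v) − Σ_{i,j} τ_{ij} ∂v_j/∂x_i − κΔT = 0 at x; consequently the two additional boundary terms −∫_{Γ_W}(V·n)ρ(∇·v)z₁ and −∫_{Γ_{adia}}(V·n)(ρH(∇·v) − Σ_{i,j}τ_{ij}∂v_j/∂x_i − κΔT)z₄ appearing in the Hadamard form of the shape gradient derived from the variational formulation vanish, so the variational-form and strong-form shape gradients coincide. -/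

import Mathlib

open MeasureTheory

noncomputable section

/-- The physical domain `ℝ²`. -/
abbrev Dom := EuclideanSpace ℝ (Fin 2)

/-- The space of conserved variables `u = (ρ, ρv₁, ρv₂, ρE) ∈ ℝ⁴`. -/
abbrev St := Fin 4 → ℝ

/-- Standard basis vector of the domain. -/
def ee (k : Fin 2) : Dom := EuclideanSpace.single k 1

/-- Velocity `v_i = u_{i+1}/u_0` from conserved variables. -/
def vel (u : St) (i : Fin 2) : ℝ := u i.succ.castSucc / u 0

/-- Squared speed `‖v‖²`. -/
def kin (u : St) : ℝ := vel u 0 ^ 2 + vel u 1 ^ 2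

/-- Total energy `E = u_3/u_0`. -/
def toten (u : St) : ℝ := u 3 / u 0

/-- Pressure `p = (R/c_v) ρ (E − ½‖v‖²)`. -/
def pres (R cv : ℝ) (u : St) : ℝ := R / cv * u 0 * (toten u - kin u / 2)

/-- Enthalpy `H = E + p/ρ`. -/
def enth (R cv : ℝ) (u : St) : ℝ := toten u + pres R cv u / u 0

/-- Temperature `T = (E − ½‖v‖²)/c_v`. -/
def temp (cv : ℝ) (u : St) : ℝ := (toten u - kin u / 2) / cv

/-- `∂v_i/∂x_l` expressed in terms of `(u, ∇u)`, where `g l = ∂u/∂x_l`. -/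
def dvel (u : St) (g : Fin 2 → St) (i l : Fin 2) : ℝ :=
  (g l i.succ.castSucc * u 0 - u i.succ.castSucc * g l 0) / u 0 ^ 2

/-- `∂E/∂x_l` expressed in terms of `(u, ∇u)`. -/
def dtoten (u : St) (g : Fin 2 → St) (l : Fin 2) : ℝ :=
  (g l 3 * u 0 - u 3 * g l 0) / u 0 ^ 2

/-- `∂T/∂x_l` expressed in terms of `(u, ∇u)`. -/
def dtemp (cv : ℝ) (u : St) (g : Fin 2 → St) (l : Fin 2) : ℝ :=
  (dtoten u g l - (vel u 0 * dvel u g 0 l + vel u 1 * dvel u g 1 l)) / cv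

/-- Viscous stress tensor `τ = μ(∇v + (∇v)ᵀ − (2/3)(∇·v)I)` in terms of `(u, ∇u)`. -/
def tauC (μ : ℝ) (u : St) (g : Fin 2 → St) (i j : Fin 2) : ℝ :=
  μ * (dvel u g i j + dvel u g j i
    - 2 / 3 * (dvel u g 0 0 + dvel u g 1 1) * (if i = j then 1 else 0))

/-- Convective fluxes `F^c = (f₁^c, f₂^c)` as a function of the conserved variables. -/
def Fc (R cv : ℝ) (u : St) (k : Fin 2) : St :=
  ![u 0 * vel u k,
    u 0 * vel u 0 * vel u k + (if k = 0 then pres R cv u else 0),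
    u 0 * vel u 1 * vel u k + (if k = 1 then pres R cv u else 0),
    u 0 * enth R cv u * vel u k]

/-- Viscous fluxes `F^v = (f₁^v, f₂^v)` as a function of `(u, ∇u)`. -/
def Fv (μ κ cv : ℝ) (u : St) (g : Fin 2 → St) (k : Fin 2) : St :=
  ![0,
    tauC μ u g 0 k,
    tauC μ u g 1 k,
    (∑ j, tauC μ u g k j * vel u j) + κ * dtemp cv u g k]

/-- Spatial derivative `∂u/∂x_k` of a field. -/
def Du (u : Dom → St) (x : Dom) (k : Fin 2) : St := fderiv ℝ u x (ee k)

/-- Divergence `∇·Φ = Σ_k ∂Φ_k/∂x_k` of a (two-component, `St`-valued) flux field. -/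
def divF (Φ : Dom → Fin 2 → St) (x : Dom) : St :=
  ∑ k, fderiv ℝ (fun y => Φ y k) x (ee k)

/-- Homogeneity tensor `G^{ij}_{kl} = ∂(f^v_k)_i/∂(∂u_j/∂x_l)`. -/
def Ghom (μ κ cv : ℝ) (u : St) (g : Fin 2 → St) (k l : Fin 2) (i j : Fin 4) : ℝ :=
  fderiv ℝ (fun g' => Fv μ κ cv u g' k i) g (Pi.single l (Pi.single j 1))

/-! Field-based quantities: density `ρ`, velocity `v`, total energy `E` given as fields. -/

/-- Pressure field `p = (R/c_v)ρ(E − ½‖v‖²)`. -/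
def presF (R cv : ℝ) (ρ : Dom → ℝ) (v : Dom → Fin 2 → ℝ) (E : Dom → ℝ) (y : Dom) : ℝ :=
  R / cv * ρ y * (E y - (v y 0 ^ 2 + v y 1 ^ 2) / 2)

/-- Temperature field `T = (E − ½‖v‖²)/c_v`. -/
def tempF (cv : ℝ) (v : Dom → Fin 2 → ℝ) (E : Dom → ℝ) (y : Dom) : ℝ :=
  (E y - (v y 0 ^ 2 + v y 1 ^ 2) / 2) / cv

/-- Enthalpy field `H = E + p/ρ`. -/
def enthF (R cv : ℝ) (ρ : Dom → ℝ) (v : Dom → Fin 2 → ℝ) (E : Dom → ℝ) (y : Dom) : ℝ :=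
  E y + presF R cv ρ v E y / ρ y

/-- Velocity gradient `∂v_i/∂x_j`. -/
def dvF (v : Dom → Fin 2 → ℝ) (y : Dom) (i j : Fin 2) : ℝ :=
  fderiv ℝ (fun y' => v y' i) y (ee j)

/-- Viscous stress tensor field `τ = μ(∇v + (∇v)ᵀ − (2/3)(∇·v)I)`. -/
def tauF (μ : ℝ) (v : Dom → Fin 2 → ℝ) (y : Dom) (i j : Fin 2) : ℝ :=
  μ * (dvF v y i j + dvF v y j i
    - 2 / 3 * (dvF v y 0 0 + dvF v y 1 1) * (if i = j then 1 else 0))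

/-- Convective flux field. -/
def FcF (R cv : ℝ) (ρ : Dom → ℝ) (v : Dom → Fin 2 → ℝ) (E : Dom → ℝ) (y : Dom)
    (k : Fin 2) : St :=
  ![ρ y * v y k,
    ρ y * v y 0 * v y k + (if k = 0 then presF R cv ρ v E y else 0),
    ρ y * v y 1 * v y k + (if k = 1 then presF R cv ρ v E y else 0),
    ρ y * enthF R cv ρ v E y * v y k]

/-- Viscous flux field. -/
def FvF (μ κ cv : ℝ) (v : Dom → Fin 2 → ℝ) (E : Dom → ℝ) (y : Dom) (k : Fin 2) : St :=
  ![0,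
    tauF μ v y 0 k,
    tauF μ v y 1 k,
    (∑ j, tauF μ v y k j * v y j) + κ * fderiv ℝ (tempF cv v E) y (ee k)]


private lemma fderiv_apply_pi' (f : Dom → St) (x : Dom)
    (h : ∀ i, DifferentiableAt ℝ (fun y => f y i) x) (w : Dom) (i : Fin 4) :
    fderiv ℝ f x w i = fderiv ℝ (fun y => f y i) x w := by
  have h2 := fderiv_pi (𝕜 := ℝ) (φ := fun i y => f y i) (x := x) h
  calc fderiv ℝ f x w i = fderiv ℝ (fun y i => f y i) x w i := rfl
    _ = _ := by rw [h2]; simp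

private lemma fderiv_mul_zero' {f g : Dom → ℝ} {x : Dom}
    (hf : DifferentiableAt ℝ f x) (hg : DifferentiableAt ℝ g x) (h0 : g x = 0) (w : Dom) :
    fderiv ℝ (fun y => f y * g y) x w = f x * fderiv ℝ g x w := by
  rw [fderiv_fun_mul hf hg]; simp [h0]

private lemma fderiv_snd_diff {f : Dom → ℝ} {x : Dom}
    (hf : ContDiffAt ℝ 2 f x) (w : Dom) :
    DifferentiableAt ℝ (fun y => fderiv ℝ f y w) x :=
  ((hf.fderiv_right (m := 1) le_rfl).differentiableAt one_ne_zero).clm_apply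
    (differentiableAt_const w)

/-- vanishing of the extra variational terms for strong solutions.
For `C²` fields `ρ, v, E` near `x ∈ ℝ²` with `ρ > 0`, if both the no-slip condition
`v(x) = 0` and the pointwise Navier–Stokes equations `∇·(F^c − F^v)(x) = 0` hold at `x`,
then `ρ(∇·v) = 0` and `ρH(∇·v) − Σ_{i,j}τ_{ij}∂v_j/∂x_i − κΔT = 0` at `x`; hence the two
additional boundary integrands of the variational-form shape gradient vanish and the
variational-form and strong-form shape gradients coincide. -/
theorem stmt_14 (R cv μ κ : ℝ) (hR : 0 < R) (hcv : 0 < cv) (hμ : 0 < μ) (hκ : 0 < κ)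
    (U : Set Dom) (hU : IsOpen U) (x : Dom) (hx : x ∈ U)
    (ρ : Dom → ℝ) (v : Dom → Fin 2 → ℝ) (E : Dom → ℝ)
    (hρ : ContDiffOn ℝ 2 ρ U)
    (hv : ContDiffOn ℝ 2 (fun y => (v y 0, v y 1)) U)
    (hE : ContDiffOn ℝ 2 E U)
    (hρpos : ∀ y ∈ U, 0 < ρ y)
    (hns : v x 0 = 0 ∧ v x 1 = 0)
    (hNS : divF (fun y k => FcF R cv ρ v E y k - FvF μ κ cv v E y k) x = 0) :
    ρ x * (dvF v x 0 0 + dvF v x 1 1) = 0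
    ∧ ρ x * enthF R cv ρ v E x * (dvF v x 0 0 + dvF v x 1 1)
        - (∑ i : Fin 2, ∑ j : Fin 2, tauF μ v x i j * dvF v x j i)
        - κ * (∑ k, fderiv ℝ (fun y => fderiv ℝ (tempF cv v E) y (ee k)) x (ee k)) = 0 := by
  have hxU := hU.mem_nhds hx
  have h12 : (2 : WithTop ℕ∞) ≠ 0 := two_ne_zero
  have hρ2 : ContDiffAt ℝ 2 ρ x := hρ.contDiffAt hxU
  have hE2 : ContDiffAt ℝ 2 E x := hE.contDiffAt hxU
  have hvp : ContDiffAt ℝ 2 (fun y => (v y 0, v y 1)) x := hv.contDiffAt hxU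
  have hvi : ∀ i : Fin 2, ContDiffAt ℝ 2 (fun y => v y i) x := by
    intro i; fin_cases i
    · exact hvp.fst
    · exact hvp.snd
  have dρ : DifferentiableAt ℝ ρ x := hρ2.differentiableAt h12
  have dE : DifferentiableAt ℝ E x := hE2.differentiableAt h12
  have dv : ∀ i : Fin 2, DifferentiableAt ℝ (fun y => v y i) x :=
    fun i => (hvi i).differentiableAt h12
  have hvx : ∀ k : Fin 2, v x k = 0 := by
    intro k; fin_cases k
    · exact hns.1
    · exact hns.2
  have ddv : ∀ i j : Fin 2, DifferentiableAt ℝ (fun y => dvF v y i j) x := by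
    intro i j
    exact fderiv_snd_diff (hvi i) (ee j)
  have dτ : ∀ i j : Fin 2, DifferentiableAt ℝ (fun y => tauF μ v y i j) x := by
    intro i j
    unfold tauF
    exact ((((ddv i j).add (ddv j i)).sub
      ((((ddv 0 0).add (ddv 1 1)).const_mul (2/3)).mul_const _)).const_mul μ)
  have hT2 : ContDiffAt ℝ 2 (tempF cv v E) x := by
    unfold tempF
    exact (hE2.sub ((((hvi 0).pow 2).add ((hvi 1).pow 2)).div_const 2)).div_const cv
  have dT2 : ∀ k : Fin 2, DifferentiableAt ℝ (fun y => fderiv ℝ (tempF cv v E) y (ee k)) x :=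
    fun k => fderiv_snd_diff hT2 (ee k)
  have hp2 : ContDiffAt ℝ 2 (presF R cv ρ v E) x := by
    unfold presF
    exact (hρ2.const_smul (R / cv)).mul
      (hE2.sub ((((hvi 0).pow 2).add ((hvi 1).pow 2)).div_const 2))
  have dp : DifferentiableAt ℝ (presF R cv ρ v E) x := hp2.differentiableAt h12
  have dH : DifferentiableAt ℝ (enthF R cv ρ v E) x := by
    unfold enthF
    exact ((hE2.add (hp2.div hρ2 (hρpos x hx).ne')).differentiableAt h12)
  -- explicit forms of components 0 and 3
  have c0 : ∀ k : Fin 2, (fun y => (FcF R cv ρ v E y k - FvF μ κ cv v E y k) 0)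
      = fun y => ρ y * v y k := by
    intro k; funext y
    show ρ y * v y k - 0 = _
    ring
  have c3 : ∀ k : Fin 2, (fun y => (FcF R cv ρ v E y k - FvF μ κ cv v E y k) 3)
      = fun y => ρ y * enthF R cv ρ v E y * v y k
        - (tauF μ v y k 0 * v y 0 + tauF μ v y k 1 * v y 1
            + κ * fderiv ℝ (tempF cv v E) y (ee k)) := by
    intro k; funext y
    show ρ y * enthF R cv ρ v E y * v y k
        - ((∑ j, tauF μ v y k j * v y j) + κ * fderiv ℝ (tempF cv v E) y (ee k)) = _
    rw [Fin.sum_univ_two]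
  have cdiff : ∀ (k : Fin 2) (i : Fin 4),
      DifferentiableAt ℝ (fun y => (FcF R cv ρ v E y k - FvF μ κ cv v E y k) i) x := by
    intro k i
    fin_cases i
    · exact (c0 k) ▸ (dρ.mul (dv k))
    · show DifferentiableAt ℝ (fun y => ρ y * v y 0 * v y k
        + (if k = 0 then presF R cv ρ v E y else 0) - tauF μ v y 0 k) x
      refine (DifferentiableAt.add ((dρ.mul (dv 0)).mul (dv k)) ?_).sub (dτ 0 k)
      split_ifs with h
      · exact dp
      · exact differentiableAt_const 0
    · show DifferentiableAt ℝ (fun y => ρ y * v y 1 * v y k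
        + (if k = 1 then presF R cv ρ v E y else 0) - tauF μ v y 1 k) x
      refine (DifferentiableAt.add ((dρ.mul (dv 1)).mul (dv k)) ?_).sub (dτ 1 k)
      split_ifs with h
      · exact dp
      · exact differentiableAt_const 0
    · exact (c3 k) ▸ (((dρ.mul dH).mul (dv k)).sub
        ((((dτ k 0).mul (dv 0)).add ((dτ k 1).mul (dv 1))).add ((dT2 k).const_mul κ)))
  have key : ∀ i : Fin 4,
      ∑ k, fderiv ℝ (fun y => (FcF R cv ρ v E y k - FvF μ κ cv v E y k) i) x (ee k) = 0 := by
    intro i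
    have h := congrFun hNS i
    simp only [divF, Finset.sum_apply, Pi.zero_apply] at h
    rw [← h]
    exact Finset.sum_congr rfl fun k _ =>
      (fderiv_apply_pi' _ x (cdiff k) (ee k) i).symm
  -- first equation
  have e0 : ∀ k : Fin 2,
      fderiv ℝ (fun y => (FcF R cv ρ v E y k - FvF μ κ cv v E y k) 0) x (ee k)
        = ρ x * dvF v x k k := by
    intro k
    rw [c0 k, fderiv_mul_zero' dρ (dv k) (hvx k)]
    rfl
  have h0 := key 0
  rw [Fin.sum_univ_two, e0 0, e0 1] at h0
  -- second equation
  have e3 : ∀ k : Fin 2,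
      fderiv ℝ (fun y => (FcF R cv ρ v E y k - FvF μ κ cv v E y k) 3) x (ee k)
        = ρ x * enthF R cv ρ v E x * dvF v x k k
          - (tauF μ v x k 0 * dvF v x 0 k + tauF μ v x k 1 * dvF v x 1 k
              + κ * fderiv ℝ (fun y => fderiv ℝ (tempF cv v E) y (ee k)) x (ee k)) := by
    intro k
    rw [c3 k]
    have hA : DifferentiableAt ℝ (fun y => ρ y * enthF R cv ρ v E y * v y k) x :=
      (dρ.mul dH).mul (dv k)
    have hB0 : DifferentiableAt ℝ (fun y => tauF μ v y k 0 * v y 0) x := (dτ k 0).mul (dv 0)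
    have hB1 : DifferentiableAt ℝ (fun y => tauF μ v y k 1 * v y 1) x := (dτ k 1).mul (dv 1)
    have hC : DifferentiableAt ℝ (fun y => κ * fderiv ℝ (tempF cv v E) y (ee k)) x :=
      (dT2 k).const_mul κ
    have hB : DifferentiableAt ℝ (fun y => tauF μ v y k 0 * v y 0 + tauF μ v y k 1 * v y 1) x :=
      hB0.add hB1
    have hBC : DifferentiableAt ℝ (fun y => tauF μ v y k 0 * v y 0 + tauF μ v y k 1 * v y 1
        + κ * fderiv ℝ (tempF cv v E) y (ee k)) x := hB.add hC
    rw [fderiv_fun_sub hA hBC, fderiv_fun_add hB hC,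
      fderiv_fun_add hB0 hB1]
    simp only [ContinuousLinearMap.sub_apply, ContinuousLinearMap.add_apply]
    rw [fderiv_mul_zero' (f := fun y => ρ y * enthF R cv ρ v E y) (dρ.mul dH) (dv k) (hvx k),
      fderiv_mul_zero' (dτ k 0) (dv 0) (hvx 0),
      fderiv_mul_zero' (dτ k 1) (dv 1) (hvx 1),
      fderiv_const_mul (dT2 k) κ]
    rfl
  have h3 := key 3
  rw [Fin.sum_univ_two, e3 0, e3 1] at h3
  constructor
  · linear_combination h0
  · simp only [Fin.sum_univ_two]
    linear_combination h3


end
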